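/- If X is a complete metric space and f : X → X is a continuous map admitting a collection of pairwise disjoint open sets {U_i} whose union is dense in X, together with f-invariant Borel probability measures μ_i with μ_i(X \ U_i) = 0 and μ_i restricted to U_i positive on every nonempty open subset of U_i, then each set U_i satisfies f(U_i ∩ X) ⊆ closure(U_i), i.e. the closure of each U_i is forward invariant under f. -/

import Mathlib

open MeasureTheory Set Filter Topology

/-- If `X` is a complete metric space and `f : X → X` is a continuous map admitting a
collection of pairwise disjoint open sets `U i` whose union is dense, together with
`f`-invariant Borel probability measures `μ i` giving full measure to `U i` and locally
positive on `U i`, then the closure of each `U i` is forward invariant under `f`. -/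
theorem stmt0 {X : Type*} [MetricSpace X] [CompleteSpace X] [MeasurableSpace X] [BorelSpace X]
    {ι : Type*} (f : X → X) (hf : Continuous f)
    (U : ι → Set X) (hUopen : ∀ i, IsOpen (U i))
    (hUdisj : Pairwise (Function.onFun Disjoint U))
    (hUdense : Dense (⋃ i, U i))
    (μ : ι → Measure X)
    (hprob : ∀ i, IsProbabilityMeasure (μ i))
    (hinv : ∀ i, MeasurePreserving f (μ i) (μ i))
    (hfull : ∀ i, μ i (Set.univ \ U i) = 0)
    (hpos : ∀ i, ∀ V : Set X, IsOpen V → V.Nonempty → V ⊆ U i → 0 < μ i V) :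
    ∀ i, f '' U i ⊆ closure (U i) := by
  intro i y hy
  obtain ⟨x, hx, rfl⟩ := hy
  by_contra hfx
  -- W is the open complement of the closure of U i
  set W : Set X := (closure (U i))ᶜ with hW
  have hWopen : IsOpen W := isOpen_compl_iff.mpr isClosed_closure
  have hfxW : f x ∈ W := hfx
  -- V is a nonempty open subset of U i
  set V : Set X := U i ∩ f ⁻¹' W with hVdef
  have hVopen : IsOpen V := (hUopen i).inter (hWopen.preimage hf)
  have hVne : V.Nonempty := ⟨x, hx, hfxW⟩
  have hVsub : V ⊆ U i := inter_subset_left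
  have hVpos : 0 < μ i V := hpos i V hVopen hVne hVsub
  -- but μ i V ≤ μ i (f ⁻¹' W) = μ i W ≤ μ i (univ \ U i) = 0
  have hpre : μ i (f ⁻¹' W) = μ i W :=
    (hinv i).measure_preimage hWopen.measurableSet.nullMeasurableSet
  have hWsub : W ⊆ Set.univ \ U i := by
    intro z hz
    exact ⟨trivial, fun hzU => hz (subset_closure hzU)⟩
  have hW0 : μ i W = 0 :=
    le_antisymm ((measure_mono hWsub).trans (hfull i).le) zero_le
  have : μ i V ≤ 0 := by
    calc μ i V ≤ μ i (f ⁻¹' W) := measure_mono inter_subset_right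
    _ = 0 := hpre.trans hW0
  exact absurd this (not_le.mpr hVpos)
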